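/- Let G be the directed graph on matching pairs of A and B, whose vertices are pairs (i, j) with A[i] = B[j], and which has an edge from (i, j) to (i', j') iff i < i', j < j', and B[j'] + δ > B[j]. Then δ-almost-increasing common subsequences of A and B of length k ≥ 1 correspond exactly to directed paths in G visiting k vertices. -/

import Mathlib

open List

def DeltaAlmostIncreasing (δ : ℝ) (l : List ℝ) : Prop :=
  l.Pairwise fun a b => b + δ > a

/-- for k ≥ 1, δ-almost-increasing common subsequences of A and B of
length k correspond exactly to sequences of k matching pairs, pairwise strictly
increasing in both coordinates and satisfying B[j_t] + δ > B[j_s] for s < t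
(i.e. directed paths on k vertices in the graph G). -/
theorem stmt_14 (δ : ℝ) (hδ : 0 < δ) (A B : List ℝ) (k : ℕ) (hk : 1 ≤ k) :
    (∃ S : List ℝ, S.length = k ∧ S <+ A ∧ S <+ B ∧ DeltaAlmostIncreasing δ S) ↔
    (∃ p : List (ℕ × ℕ), p.length = k ∧
      (∀ q ∈ p, q.1 < A.length ∧ q.2 < B.length ∧ A[q.1]! = B[q.2]!) ∧
      p.Pairwise (fun q q' => q.1 < q'.1 ∧ q.2 < q'.2 ∧ B[q'.2]! + δ > B[q.2]!)) := by
  constructor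
  · rintro ⟨S, hlen, hSA, hSB, hinc⟩
    obtain ⟨f, hf⟩ := sublist_iff_exists_fin_orderEmbedding_get_eq.mp hSA
    obtain ⟨g, hg⟩ := sublist_iff_exists_fin_orderEmbedding_get_eq.mp hSB
    refine ⟨(List.finRange S.length).map (fun t => ((f t : ℕ), (g t : ℕ))), by simp [hlen],
      ?_, ?_⟩
    · intro q hq
      simp only [List.mem_map, List.mem_finRange, true_and] at hq
      obtain ⟨t, rfl⟩ := hq
      refine ⟨(f t).isLt, (g t).isLt, ?_⟩
      show A[(f t : ℕ)]! = B[(g t : ℕ)]!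
      rw [getElem!_pos A _ (f t).isLt, getElem!_pos B _ (g t).isLt]
      have h1 := hf t
      have h2 := hg t
      simp only [List.get_eq_getElem] at h1 h2
      rw [← h1, ← h2]
    · have hp := List.pairwise_lt_finRange S.length
      refine hp.map _ ?_
      intro a b hab
      refine ⟨f.strictMono hab, g.strictMono hab, ?_⟩
      show B[(g b : ℕ)]! + δ > B[(g a : ℕ)]!
      rw [getElem!_pos B _ (g b).isLt, getElem!_pos B _ (g a).isLt]
      have h := List.pairwise_iff_get.mp hinc a b hab
      rw [hg a, hg b] at h
      simpa [List.get_eq_getElem] using h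
  · rintro ⟨p, hlen, hmem, hpw⟩
    refine ⟨p.map (fun q => B[q.2]!), by simp [hlen], ?_, ?_, ?_⟩
    · rw [sublist_iff_exists_fin_orderEmbedding_get_eq]
      have hmono : StrictMono (fun t : Fin (p.map (fun q => B[q.2]!)).length =>
          (⟨(p.get (t.cast (by simp))).1,
            (hmem _ (p.get_mem _)).1⟩ : Fin A.length)) := by
        intro a b hab
        exact (List.pairwise_iff_get.mp hpw _ _ (by simpa using hab)).1
      refine ⟨OrderEmbedding.ofStrictMono _ hmono, fun t => ?_⟩
      have ht : (t : ℕ) < p.length := by simpa using t.isLt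
      have hm := hmem (p[(t : ℕ)]) (p.getElem_mem ht)
      simp only [OrderEmbedding.coe_ofStrictMono, List.get_eq_getElem, List.getElem_map,
        Fin.coe_cast]
      rw [← hm.2.2]
      exact getElem!_pos A (p[(t : ℕ)].1) hm.1
    · rw [sublist_iff_exists_fin_orderEmbedding_get_eq]
      have hmono : StrictMono (fun t : Fin (p.map (fun q => B[q.2]!)).length =>
          (⟨(p.get (t.cast (by simp))).2,
            (hmem _ (p.get_mem _)).2.1⟩ : Fin B.length)) := by
        intro a b hab
        exact (List.pairwise_iff_get.mp hpw _ _ (by simpa using hab)).2.1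
      refine ⟨OrderEmbedding.ofStrictMono _ hmono, fun t => ?_⟩
      have ht : (t : ℕ) < p.length := by simpa using t.isLt
      have hm := hmem (p[(t : ℕ)]) (p.getElem_mem ht)
      simp only [OrderEmbedding.coe_ofStrictMono, List.get_eq_getElem, List.getElem_map,
        Fin.coe_cast]
      exact getElem!_pos B _ hm.2.1
    · exact hpw.map _ (fun a b hab => hab.2.2)
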